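/- The cop number of the n-dimensional hypercube Q_n satisfies c(Q_n) ≤ ⌈(n+1)/2⌉. -/

import Mathlib

open SimpleGraph

/-- The `n`-dimensional hypercube: vertices are binary strings of length `n`,
adjacent iff they differ in exactly one bit (Hamming distance 1). -/
def Qcube (n : ℕ) : SimpleGraph (Fin n → Bool) where
  Adj x y := hammingDist x y = 1
  symm := ⟨fun x y h => by show hammingDist y x = 1; rwa [hammingDist_comm]⟩
  loopless := ⟨fun x h => by simp [hammingDist_self] at h⟩

/-- A strategy for `k` cops on a graph `G`: initial positions, and a move
function; each cop stays put or moves along an edge. -/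
structure CopStrategy {V : Type*} (G : SimpleGraph V) (k : ℕ) where
  init : Fin k → V
  move : (Fin k → V) → V → (Fin k → V)
  valid : ∀ c r i, move c r i = c i ∨ G.Adj (c i) (move c r i)

/-- A strategy for the robber: an initial position (chosen after seeing the
cops' initial positions) and a move function; the robber stays put or moves
along an edge. -/
structure RobberStrategy {V : Type*} (G : SimpleGraph V) (k : ℕ) where
  init : (Fin k → V) → V
  move : (Fin k → V) → V → V
  valid : ∀ c r, move c r = r ∨ G.Adj r (move c r)

/-- The sequence of game states `(cop positions, robber position)`: in each
round the cops move first, then the robber. -/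
def gamePlay {V : Type*} {G : SimpleGraph V} {k : ℕ} (S : CopStrategy G k)
    (R : RobberStrategy G k) : ℕ → (Fin k → V) × V
  | 0 => (S.init, R.init S.init)
  | (t + 1) =>
      let p := gamePlay S R t
      let c' := S.move p.1 p.2
      (c', R.move c' p.2)

/-- `k` cops have a winning strategy on `G`: for every robber strategy, at some
point a cop occupies the robber's vertex (either at a state, or in the middle
of a round just after the cops move). -/
def CopsWin {V : Type*} (G : SimpleGraph V) (k : ℕ) : Prop :=
  ∃ S : CopStrategy G k, ∀ R : RobberStrategy G k, ∃ t, ∃ i : Fin k,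
    (gamePlay S R t).1 i = (gamePlay S R t).2 ∨
    S.move (gamePlay S R t).1 (gamePlay S R t).2 i = (gamePlay S R t).2

/-- The cop number of `G`: the least number of cops that can guarantee
capturing the robber. -/
noncomputable def copNumber {V : Type*} (G : SimpleGraph V) : ℕ :=
  sInf {k | CopsWin G k}

namespace CR

variable {n k : ℕ}

/-- difference set -/
def Ds (x y : Fin n → Bool) : Finset (Fin n) := {i | x i ≠ y i}

lemma mem_Ds {x y : Fin n → Bool} {i : Fin n} : i ∈ Ds x y ↔ x i ≠ y i := by
  simp [Ds]

lemma Ds_comm (x y : Fin n → Bool) : Ds x y = Ds y x := by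
  ext i; simp [mem_Ds, ne_comm]

lemma Ds_eq_empty {x y : Fin n → Bool} : Ds x y = ∅ ↔ x = y := by
  constructor
  · intro h; funext i
    by_contra hne
    have : i ∈ Ds x y := mem_Ds.2 hne
    simp [h] at this
  · intro h; subst h; ext i; simp [mem_Ds]

lemma hamming_eq_card (x y : Fin n → Bool) : hammingDist x y = (Ds x y).card := rfl

def flip (u : Fin n) (x : Fin n → Bool) : Fin n → Bool := Function.update x u (!(x u))

lemma flip_apply (u : Fin n) (x : Fin n → Bool) (i : Fin n) :
    flip u x i = if i = u then !(x u) else x i := by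
  simp [flip, Function.update_apply]

lemma Ds_flip_left (u : Fin n) (x y : Fin n → Bool) :
    Ds (flip u x) y = if u ∈ Ds x y then (Ds x y).erase u else insert u (Ds x y) := by
  ext i
  by_cases hi : i = u
  · subst hi
    by_cases h : i ∈ Ds x y <;>
      simp_all [mem_Ds, flip_apply] <;> revert h <;>
        cases x i <;> cases y i <;> simp
  · by_cases h : u ∈ Ds x y <;> simp [mem_Ds, flip_apply, hi, h, Finset.mem_erase]

lemma Ds_flip_right (u : Fin n) (x y : Fin n → Bool) :
    Ds x (flip u y) = if u ∈ Ds x y then (Ds x y).erase u else insert u (Ds x y) := by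
  rw [Ds_comm, Ds_flip_left, Ds_comm x y]

lemma adj_flip (u : Fin n) (x : Fin n → Bool) : (Qcube n).Adj x (flip u x) := by
  show hammingDist x (flip u x) = 1
  rw [hamming_eq_card]
  have : Ds x (flip u x) = {u} := by
    ext i
    by_cases hi : i = u
    · subst hi; simp [mem_Ds, flip_apply]
    · simp [mem_Ds, flip_apply, hi]
  rw [this]; simp

/-- legal robber moves are stays or flips -/
lemma legalR_cases {r r' : Fin n → Bool} (h : r' = r ∨ (Qcube n).Adj r r') :
    r' = r ∨ ∃ u, r' = flip u r := by
  rcases h with h | h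
  · exact Or.inl h
  · right
    have : (Ds r r').card = 1 := h
    obtain ⟨u, hu⟩ := Finset.card_eq_one.1 this
    refine ⟨u, funext fun i => ?_⟩
    by_cases hi : i = u
    · subst hi
      have : i ∈ Ds r r' := by rw [hu]; simp
      rw [mem_Ds] at this
      rw [flip_apply]; simp only [if_pos rfl]
      revert this; cases r i <;> cases r' i <;> simp
    · have : i ∉ Ds r r' := by rw [hu]; simp [hi]
      rw [mem_Ds, not_not] at this
      rw [flip_apply, if_neg hi, this]


variable {n k : ℕ}

abbrev Cfg (n k : ℕ) := (Fin k → (Fin n → Bool)) × (Fin n → Bool)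

def legalC (c c' : Fin k → (Fin n → Bool)) : Prop :=
  ∀ i, c' i = c i ∨ (Qcube n).Adj (c i) (c' i)

def legalR (r r' : Fin n → Bool) : Prop := r' = r ∨ (Qcube n).Adj r r'

def ReachN (G : Cfg n k → Prop) : ℕ → Cfg n k → Prop
  | 0, d => G d
  | (m+1), d => G d ∨ ∃ c', legalC d.1 c' ∧
      (G (c', d.2) ∨ ∀ r', legalR d.2 r' → ReachN G m (c', r'))

lemma ReachN_mono {G : Cfg n k → Prop} :
    ∀ {m m' : ℕ}, m ≤ m' → ∀ {d}, ReachN G m d → ReachN G m' d := by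
  intro m
  induction m with
  | zero =>
    intro m' _ d h
    cases m' with
    | zero => exact h
    | succ m' => exact Or.inl h
  | succ m ih =>
    intro m' hm d h
    cases m' with
    | zero => omega
    | succ m' =>
      rcases h with h | ⟨c', hc', h⟩
      · exact Or.inl h
      · refine Or.inr ⟨c', hc', ?_⟩
        rcases h with h | h
        · exact Or.inl h
        · exact Or.inr fun r' hr' => ih (by omega) (h r' hr')

lemma ReachN_monoG {G G' : Cfg n k → Prop} (hGG : ∀ d, G d → G' d) :
    ∀ {m : ℕ} {d}, ReachN G m d → ReachN G' m d := by
  intro m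
  induction m with
  | zero => exact fun h => hGG _ h
  | succ m ih =>
    intro d h
    rcases h with h | ⟨c', hc', h⟩
    · exact Or.inl (hGG _ h)
    · refine Or.inr ⟨c', hc', ?_⟩
      rcases h with h | h
      · exact Or.inl (hGG _ h)
      · exact Or.inr fun r' hr' => ih (h r' hr')

open Classical in
/-- uniform bound from pointwise existence, by finiteness -/
lemma finsup {α : Type*} [Fintype α] (p : α → Prop) (Q : ℕ → α → Prop)
    (hmono : ∀ {m m'} , m ≤ m' → ∀ a, Q m a → Q m' a)
    (h : ∀ a, p a → ∃ m, Q m a) : ∃ M, ∀ a, p a → Q M a := by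
  classical
  refine ⟨Finset.univ.sup (fun a => if hp : p a then Nat.find (h a hp) else 0), fun a hp => ?_⟩
  have h1 : Q (Nat.find (h a hp)) a := Nat.find_spec (h a hp)
  refine hmono ?_ a h1
  have h2 : Nat.find (h a hp) = (if hp' : p a then Nat.find (h a hp') else 0) := by simp [hp]
  rw [h2]
  exact Finset.le_sup (f := fun a => if hp' : p a then Nat.find (h a hp') else 0)
    (Finset.mem_univ a)

lemma step_lemma {G : Cfg n k → Prop} {d : Cfg n k} {c' : Fin k → (Fin n → Bool)}
    (hleg : legalC d.1 c')
    (h : G (c', d.2) ∨ ∀ r', legalR d.2 r' → ∃ m, ReachN G m (c', r')) :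
    ∃ m, ReachN G m d := by
  rcases h with h | h
  · exact ⟨1, Or.inr ⟨c', hleg, Or.inl h⟩⟩
  · obtain ⟨M, hM⟩ := finsup (fun r' => legalR d.2 r') (fun m r' => ReachN G m (c', r'))
      (fun hm r' => ReachN_mono hm) h
    exact ⟨M + 1, Or.inr ⟨c', hleg, Or.inr hM⟩⟩

lemma comp {G₁ G₂ : Cfg n k → Prop}
    (h : ∀ d : Cfg n k, G₁ d → (∃ m, ReachN G₂ m d) ∧
      ∀ r'', legalR d.2 r'' → ∃ m, ReachN G₂ m (d.1, r'')) :
    ∀ {m : ℕ} {cfg : Cfg n k}, ReachN G₁ m cfg → ∃ M, ReachN G₂ M cfg := by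
  have hu : ∃ M₀, ∀ d : Cfg n k, G₁ d → ReachN G₂ M₀ d ∧
      ∀ r'', legalR d.2 r'' → ReachN G₂ M₀ (d.1, r'') := by
    have := finsup (α := Cfg n k) G₁
      (fun m d => ReachN G₂ m d ∧ ∀ r'', legalR d.2 r'' → ReachN G₂ m (d.1, r''))
      (fun hm d hd => ⟨ReachN_mono hm hd.1, fun r'' hr => ReachN_mono hm (hd.2 r'' hr)⟩)
      (fun d hd => by
        obtain ⟨m1, hm1⟩ := (h d hd).1
        obtain ⟨M2, hM2⟩ := finsup (fun r'' => legalR d.2 r'')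
          (fun m r'' => ReachN G₂ m (d.1, r'')) (fun hm r'' => ReachN_mono hm) (h d hd).2
        exact ⟨max m1 M2, ReachN_mono (le_max_left _ _) hm1,
          fun r'' hr => ReachN_mono (le_max_right _ _) (hM2 r'' hr)⟩)
    exact this
  obtain ⟨M₀, hM₀⟩ := hu
  intro m
  induction m with
  | zero => exact fun {cfg} hc => ⟨M₀, (hM₀ cfg hc).1⟩
  | succ m ih =>
    intro cfg hc
    rcases hc with hc | ⟨c', hleg, hc⟩
    · exact ⟨M₀, (hM₀ cfg hc).1⟩
    · rcases hc with hc | hc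
      · exact ⟨M₀ + 1, Or.inr ⟨c', hleg, Or.inr fun r' hr' => (hM₀ _ hc).2 r' hr'⟩⟩
      · choose F hF using fun r' (hr' : legalR cfg.2 r') => ih (hc r' hr')
        obtain ⟨M, hM⟩ := finsup (fun r' => legalR cfg.2 r')
          (fun m r' => ReachN G₂ m (c', r')) (fun hm r' => ReachN_mono hm)
          (fun r' hr' => ⟨F r' hr', hF r' hr'⟩)
        exact ⟨M + 1, Or.inr ⟨c', hleg, Or.inr hM⟩⟩

def Gcap (d : Cfg n k) : Prop := ∃ i, d.1 i = d.2

def Win (d : Cfg n k) : Prop := ∃ m, ReachN Gcap m d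

open Classical in
noncomputable def rk (d : Cfg n k) : ℕ := if h : Win d then Nat.find h else 0

open Classical in
lemma rk_spec {d : Cfg n k} (h : Win d) : ReachN Gcap (rk d) d := by
  rw [rk, dif_pos h]; exact Nat.find_spec h

open Classical in
lemma rk_min {d : Cfg n k} {m : ℕ} (h : ReachN Gcap m d) : rk d ≤ m := by
  have hw : Win d := ⟨m, h⟩
  rw [rk, dif_pos hw]; exact Nat.find_le h

lemma RK {d : Cfg n k} (hw : Win d) (hnc : ¬ Gcap d) :
    ∃ c', legalC d.1 c' ∧ (Gcap (c', d.2) ∨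
      ∀ r', legalR d.2 r' → Win (c', r') ∧ rk ((c', r') : Cfg n k) < rk d) := by
  have hr := rk_spec hw
  cases hm : rk d with
  | zero => rw [hm] at hr; exact absurd hr hnc
  | succ m =>
    rw [hm] at hr
    rcases hr with hr | ⟨c', hleg, hr⟩
    · exact absurd hr hnc
    · refine ⟨c', hleg, ?_⟩
      rcases hr with hr | hr
      · exact Or.inl hr
      · refine Or.inr fun r' hr' => ?_
        have := hr r' hr'
        exact ⟨⟨m, this⟩, by have := rk_min this; omega⟩

open Classical in
noncomputable def mkStrategy (cInit : Fin k → (Fin n → Bool)) : CopStrategy (Qcube n) k where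
  init := cInit
  move := fun c r =>
    if h : Win ((c, r) : Cfg n k) ∧ ¬ Gcap ((c, r) : Cfg n k) then (RK h.1 h.2).choose else c
  valid := by
    intro c r i
    by_cases h : Win ((c, r) : Cfg n k) ∧ ¬ Gcap ((c, r) : Cfg n k)
    · simp only [dif_pos h]
      exact (RK h.1 h.2).choose_spec.1 i
    · simp [dif_neg h]

lemma bridge {cInit : Fin k → (Fin n → Bool)}
    (h : ∀ r, Win ((cInit, r) : Cfg n k)) : CopsWin (Qcube n) k := by
  classical
  refine ⟨mkStrategy cInit, fun R => ?_⟩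
  set S := mkStrategy (n := n) cInit with hS
  suffices H : ∀ N t, Win (gamePlay S R t) → rk (gamePlay S R t) ≤ N →
      ∃ t', ∃ i : Fin k, (gamePlay S R t').1 i = (gamePlay S R t').2 ∨
        S.move (gamePlay S R t').1 (gamePlay S R t').2 i = (gamePlay S R t').2 by
    have h0 : gamePlay S R 0 = (cInit, R.init cInit) := rfl
    have hw : Win (gamePlay S R 0) := by rw [h0]; exact h _
    exact H (rk (gamePlay S R 0)) 0 hw le_rfl
  intro N
  induction N with
  | zero =>
    intro t hw hrk
    by_cases hc : Gcap (gamePlay S R t)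
    · obtain ⟨i, hi⟩ := hc; exact ⟨t, i, Or.inl hi⟩
    · obtain ⟨c', hleg, hd⟩ := RK hw hc
      have hmove : S.move (gamePlay S R t).1 (gamePlay S R t).2 = (RK hw hc).choose := by
        show (if h : _ ∧ _ then _ else _) = _
        rw [dif_pos ⟨hw, hc⟩]
      rcases (RK hw hc).choose_spec.2 with hg | hg
      · obtain ⟨i, hi⟩ := hg
        exact ⟨t, i, Or.inr (by rw [hmove]; exact hi)⟩
      · exfalso
        have hr' : legalR (gamePlay S R t).2 (R.move (RK hw hc).choose (gamePlay S R t).2) :=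
          R.valid _ _
        have := (hg _ hr').2
        omega
  | succ N ih =>
    intro t hw hrk
    by_cases hc : Gcap (gamePlay S R t)
    · obtain ⟨i, hi⟩ := hc; exact ⟨t, i, Or.inl hi⟩
    · obtain ⟨c', hleg, hd⟩ := RK hw hc
      have hmove : S.move (gamePlay S R t).1 (gamePlay S R t).2 = (RK hw hc).choose := by
        show (if h : _ ∧ _ then _ else _) = _
        rw [dif_pos ⟨hw, hc⟩]
      rcases (RK hw hc).choose_spec.2 with hg | hg
      · obtain ⟨i, hi⟩ := hg
        exact ⟨t, i, Or.inr (by rw [hmove]; exact hi)⟩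
      · have hnext : gamePlay S R (t+1) =
            ((RK hw hc).choose, R.move (RK hw hc).choose (gamePlay S R t).2) := by
          show (let p := gamePlay S R t; let c' := S.move p.1 p.2; (c', R.move c' p.2)) = _
          simp only [hmove]
        have hr' : legalR (gamePlay S R t).2 (R.move (RK hw hc).choose (gamePlay S R t).2) :=
          R.valid _ _
        have hg' := hg _ hr'
        refine ih (t+1) ?_ ?_
        · rw [hnext]; exact hg'.1
        · rw [hnext]; have := hg'.2; omega

/-! ### finset toggling helpers -/

lemma erase_inter' (v : Fin n) (s t : Finset (Fin n)) : s.erase v ∩ t = (s ∩ t).erase v := by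
  ext i; simp only [Finset.mem_erase, Finset.mem_inter]; tauto

lemma erase_sdiff' (v : Fin n) (s t : Finset (Fin n)) : s.erase v \ t = (s \ t).erase v := by
  ext i; simp only [Finset.mem_erase, Finset.mem_sdiff]; tauto

lemma insert_inter_of_mem' {v : Fin n} {t : Finset (Fin n)} (s : Finset (Fin n)) (h : v ∈ t) :
    insert v s ∩ t = insert v (s ∩ t) := by
  ext i
  simp only [Finset.mem_inter, Finset.mem_insert]
  constructor
  · rintro ⟨h1 | h1, h2⟩
    · exact Or.inl h1
    · exact Or.inr ⟨h1, h2⟩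
  · rintro (h1 | ⟨h1, h2⟩)
    · exact ⟨Or.inl h1, h1 ▸ h⟩
    · exact ⟨Or.inr h1, h2⟩

lemma insert_inter_of_not_mem' {v : Fin n} {t : Finset (Fin n)} (s : Finset (Fin n)) (h : v ∉ t) :
    insert v s ∩ t = s ∩ t := by
  ext i
  simp only [Finset.mem_inter, Finset.mem_insert]
  constructor
  · rintro ⟨h1 | h1, h2⟩
    · exact absurd (h1 ▸ h2) h
    · exact ⟨h1, h2⟩
  · tauto

/-- the robber's single move changes any Ds by at most a toggle -/
lemma Ds_robber_subset (x r r' : Fin n → Bool) (h : legalR r r') :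
    ∃ w : Option (Fin n), Ds x r' = (match w with
      | none => Ds x r
      | some w => if w ∈ Ds x r then (Ds x r).erase w else insert w (Ds x r)) := by
  rcases legalR_cases h with h | ⟨u, h⟩
  · exact ⟨none, by rw [h]⟩
  · exact ⟨some u, by rw [h, Ds_flip_right]⟩

/-! ### controller structures -/

def sl (Uf Pf : Fin k → Finset (Fin n)) (j : Fin k) (x r : Fin n → Bool) : Finset (Fin n) :=
  (Ds x r ∩ Uf j) \ Pf j

def slack0 (ctrl : Finset (Fin k)) (Uf Pf : Fin k → Finset (Fin n)) (d : Cfg n k) : Prop :=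
  ∀ j ∈ ctrl, sl Uf Pf j (d.1 j) d.2 = ∅

def slackOK (ctrl : Finset (Fin k)) (Uf Pf : Fin k → Finset (Fin n)) (d : Cfg n k) : Prop :=
  ∀ j ∈ ctrl, (sl Uf Pf j (d.1 j) d.2).card ≤ 1

def capU (U : Finset (Fin n)) (d : Cfg n k) : Prop := ∃ j, Ds (d.1 j) d.2 ∩ U = ∅

def Gl (U : Finset (Fin n)) (ctrl : Finset (Fin k)) (Uf Pf : Fin k → Finset (Fin n))
    (d : Cfg n k) : Prop := slack0 ctrl Uf Pf d ∧ capU U d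

def Stat (U A : Finset (Fin n)) (ctrl : Finset (Fin k)) (Pf Uf : Fin k → Finset (Fin n)) : Prop :=
  A ⊆ U ∧
  (∀ j ∈ ctrl, U ⊆ Uf j ∧ Pf j ⊆ Uf j ∧ Pf j ∩ A = ∅ ∧ (Pf j).card ≤ 2) ∧
  (U \ A ⊆ ctrl.biUnion Pf) ∧
  (∀ j ∈ ctrl, ∀ j' ∈ ctrl, j ≠ j' → Pf j ∩ Pf j' = ∅) ∧
  2 * ctrl.card + A.card + 1 ≤ 2 * k

open Classical in
/-- the standard controller maintenance move -/
noncomputable def ciMove (Uf Pf : Fin k → Finset (Fin n)) (d : Cfg n k) (j : Fin k) :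
    Fin n → Bool :=
  if h : (sl Uf Pf j (d.1 j) d.2).Nonempty then flip ((sl Uf Pf j (d.1 j) d.2).min' h) (d.1 j)
  else d.1 j

lemma ciMove_legal (Uf Pf : Fin k → Finset (Fin n)) (d : Cfg n k) (j : Fin k) :
    ciMove Uf Pf d j = d.1 j ∨ (Qcube n).Adj (d.1 j) (ciMove Uf Pf d j) := by
  rw [ciMove]
  split
  · exact Or.inr (adj_flip _ _)
  · exact Or.inl rfl

lemma sl_erase (Uf Pf : Fin k → Finset (Fin n)) (j : Fin k) (x r : Fin n → Bool) (v : Fin n)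
    (hv : v ∈ Ds x r) : sl Uf Pf j (flip v x) r = (sl Uf Pf j x r).erase v := by
  simp only [sl, Ds_flip_left, if_pos hv, erase_inter', erase_sdiff']

lemma mem_sl_Ds {Uf Pf : Fin k → Finset (Fin n)} {j : Fin k} {x r : Fin n → Bool} {v : Fin n}
    (h : v ∈ sl Uf Pf j x r) : v ∈ Ds x r :=
  (Finset.mem_inter.1 (Finset.mem_sdiff.1 h).1).1

lemma ciMove_Ds (Uf Pf : Fin k → Finset (Fin n)) (d : Cfg n k) (j : Fin k) :
    Ds (ciMove Uf Pf d j) d.2 = Ds (d.1 j) d.2 ∨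
    ∃ h : (sl Uf Pf j (d.1 j) d.2).Nonempty,
      Ds (ciMove Uf Pf d j) d.2 = (Ds (d.1 j) d.2).erase ((sl Uf Pf j (d.1 j) d.2).min' h) := by
  rw [ciMove]
  split
  · next h =>
    refine Or.inr ⟨h, ?_⟩
    have hv : (sl Uf Pf j (d.1 j) d.2).min' h ∈ Ds (d.1 j) d.2 :=
      mem_sl_Ds ((sl Uf Pf j (d.1 j) d.2).min'_mem h)
    rw [Ds_flip_left, if_pos hv]
  · exact Or.inl rfl

lemma ciMove_slack0 (Uf Pf : Fin k → Finset (Fin n)) (d : Cfg n k) (j : Fin k)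
    (h : (sl Uf Pf j (d.1 j) d.2).card ≤ 1) :
    sl Uf Pf j (ciMove Uf Pf d j) d.2 = ∅ := by
  by_cases hne : (sl Uf Pf j (d.1 j) d.2).Nonempty
  · have hvsl := (sl Uf Pf j (d.1 j) d.2).min'_mem hne
    have hvD := mem_sl_Ds hvsl
    rw [ciMove, dif_pos hne, sl_erase Uf Pf j _ _ _ hvD]
    apply Finset.card_eq_zero.1
    rw [Finset.card_erase_of_mem hvsl]
    omega
  · rw [ciMove, dif_neg hne]
    exact Finset.not_nonempty_iff_eq_empty.1 hne

lemma sl_robber_card {Uf Pf : Fin k → Finset (Fin n)} {j : Fin k} {x r r' : Fin n → Bool}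
    (h0 : sl Uf Pf j x r = ∅) (h : legalR r r') : (sl Uf Pf j x r').card ≤ 1 := by
  rcases legalR_cases h with h | ⟨u, h⟩
  · subst h; rw [h0]; simp
  · subst h
    rw [sl, Ds_flip_right]
    split
    · rw [erase_inter', erase_sdiff', ← sl, h0]; simp
    · calc ((insert u (Ds x r) ∩ Uf j) \ Pf j).card
          ≤ ((insert u (Ds x r ∩ Uf j)) \ Pf j).card := by
            apply Finset.card_le_card
            intro i hi
            simp only [Finset.mem_sdiff, Finset.mem_inter, Finset.mem_insert] at hi ⊢
            tauto
        _ ≤ (insert u ((Ds x r ∩ Uf j) \ Pf j)).card := by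
            apply Finset.card_le_card
            intro i hi
            simp only [Finset.mem_sdiff, Finset.mem_insert] at hi ⊢
            tauto
        _ ≤ ((Ds x r ∩ Uf j) \ Pf j).card + 1 := Finset.card_insert_le _ _
        _ ≤ 1 := by rw [← sl, h0]; simp

lemma subset_singleton_erase {s : Finset (Fin n)} {v : Fin n} (h : s ⊆ {v}) :
    s.erase v = ∅ := by
  apply Finset.eq_empty_of_forall_notMem
  intro x hx
  have h1 := Finset.mem_erase.1 hx
  have := h h1.2
  simp at this
  exact h1.1 this

def Bset (U : Finset (Fin n)) (ctrl : Finset (Fin k)) (Uf Pf : Fin k → Finset (Fin n))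
    (d : Cfg n k) (j0 : Fin k) : Finset (Fin n) :=
  (Ds (d.1 j0) d.2 ∩ U) ∪ (if j0 ∈ ctrl then sl Uf Pf j0 (d.1 j0) d.2 else ∅)

lemma Bset_subset_Ds (U : Finset (Fin n)) (ctrl : Finset (Fin k))
    (Uf Pf : Fin k → Finset (Fin n)) (d : Cfg n k) (j0 : Fin k) :
    Bset U ctrl Uf Pf d j0 ⊆ Ds (d.1 j0) d.2 := by
  intro x hx
  rcases Finset.mem_union.1 hx with hx | hx
  · exact (Finset.mem_inter.1 hx).1
  · split at hx
    · exact mem_sl_Ds hx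
    · simp at hx

open Classical in
noncomputable def orMove (U : Finset (Fin n)) (ctrl : Finset (Fin k))
    (Uf Pf : Fin k → Finset (Fin n)) (d : Cfg n k) (j0 : Fin k) : Fin k → (Fin n → Bool) :=
  fun j =>
    if j = j0 then
      (if h : (Bset U ctrl Uf Pf d j0).Nonempty
       then flip ((Bset U ctrl Uf Pf d j0).min' h) (d.1 j0) else d.1 j0)
    else if j ∈ ctrl then ciMove Uf Pf d j else d.1 j

lemma one_round {U : Finset (Fin n)} {ctrl : Finset (Fin k)} {Uf Pf : Fin k → Finset (Fin n)}
    (d : Cfg n k) (hsl : slackOK ctrl Uf Pf d) (j0 : Fin k)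
    (hB : (Bset U ctrl Uf Pf d j0).card ≤ 1) :
    ReachN (Gl U ctrl Uf Pf) 1 d := by
  classical
  set B := Bset U ctrl Uf Pf d j0 with hBdef
  set c' := orMove U ctrl Uf Pf d j0 with hc'
  refine Or.inr ⟨c', ?_, Or.inl ⟨?_, ?_⟩⟩
  · -- legal
    intro j
    simp only [hc', orMove]
    by_cases hjj : j = j0
    · subst hjj
      rw [if_pos rfl]
      split
      · exact Or.inr (adj_flip _ _)
      · exact Or.inl rfl
    · rw [if_neg hjj]
      split
      · exact ciMove_legal Uf Pf d j
      · exact Or.inl rfl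
  · -- slack0 at mid
    intro j hj
    show sl Uf Pf j (c' j) d.2 = ∅
    simp only [hc', orMove]
    by_cases hjj : j = j0
    · subst hjj
      rw [if_pos rfl]
      by_cases hne : B.Nonempty
      · rw [dif_pos hne]
        have hv : B.min' hne ∈ B := B.min'_mem hne
        have hvD : B.min' hne ∈ Ds (d.1 j) d.2 := Bset_subset_Ds U ctrl Uf Pf d j hv
        rw [sl_erase Uf Pf j _ _ _ hvD]
        apply subset_singleton_erase
        intro x hx
        have hxB : x ∈ B := by
          rw [hBdef, Bset, if_pos hj]
          exact Finset.mem_union_right _ hx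
        have := Finset.card_le_one.1 hB x hxB (B.min' hne) hv
        simp [this]
      · rw [dif_neg hne]
        rw [Finset.not_nonempty_iff_eq_empty] at hne
        apply Finset.eq_empty_of_forall_notMem
        intro x hx
        have hxB : x ∈ B := by
          rw [hBdef, Bset, if_pos hj]
          exact Finset.mem_union_right _ hx
        rw [hne] at hxB
        simp at hxB
    · rw [if_neg hjj, if_pos hj]
      exact ciMove_slack0 Uf Pf d j (hsl j hj)
  · -- capU at mid
    refine ⟨j0, ?_⟩
    have hsub : Ds (d.1 j0) d.2 ∩ U ⊆ B := by
      rw [hBdef, Bset]; exact Finset.subset_union_left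
    simp only [hc', orMove, if_pos rfl, if_true]
    by_cases hne : B.Nonempty
    · rw [dif_pos hne]
      have hv : B.min' hne ∈ B := B.min'_mem hne
      have hvD : B.min' hne ∈ Ds (d.1 j0) d.2 := Bset_subset_Ds U ctrl Uf Pf d j0 hv
      rw [Ds_flip_left, if_pos hvD, erase_inter']
      apply subset_singleton_erase
      intro x hx
      have := Finset.card_le_one.1 hB x (hsub hx) (B.min' hne) hv
      simp [this]
      rfl
    · rw [dif_neg hne]
      rw [Finset.not_nonempty_iff_eq_empty] at hne
      rw [hne] at hsub
      exact Finset.subset_empty.1 hsub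

lemma sdiff_erase_of_not_mem' {v : Fin n} {P : Finset (Fin n)} (h : v ∉ P)
    (s : Finset (Fin n)) : P \ s.erase v = P \ s := by
  ext i
  simp only [Finset.mem_sdiff, Finset.mem_erase]
  constructor
  · rintro ⟨h1, h2⟩
    refine ⟨h1, fun h3 => h2 ⟨fun he => h (he ▸ h1), h3⟩⟩
  · rintro ⟨h1, h2⟩
    exact ⟨h1, fun h3 => h2 h3.2⟩

lemma sdiff_insert_of_not_mem' {v : Fin n} {P : Finset (Fin n)} (h : v ∉ P)
    (s : Finset (Fin n)) : P \ insert v s = P \ s := by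
  ext i
  simp only [Finset.mem_sdiff, Finset.mem_insert]
  constructor
  · rintro ⟨h1, h2⟩
    exact ⟨h1, fun h3 => h2 (Or.inr h3)⟩
  · rintro ⟨h1, h2⟩
    refine ⟨h1, ?_⟩
    rintro (h3 | h3)
    · exact h (h3 ▸ h1)
    · exact h2 h3

lemma sdiff_insert_eq_erase' (w : Fin n) (P s : Finset (Fin n)) :
    P \ insert w s = (P \ s).erase w := by
  ext i
  simp only [Finset.mem_sdiff, Finset.mem_insert, Finset.mem_erase]
  tauto

lemma ciMove_Pf (Uf Pf : Fin k → Finset (Fin n)) (d : Cfg n k) (j : Fin k) :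
    Pf j \ Ds (ciMove Uf Pf d j) d.2 = Pf j \ Ds (d.1 j) d.2 := by
  rcases ciMove_Ds Uf Pf d j with hD | ⟨hne, hD⟩
  · rw [hD]
  · rw [hD]
    have hv := (sl Uf Pf j (d.1 j) d.2).min'_mem hne
    have hvP : (sl Uf Pf j (d.1 j) d.2).min' hne ∉ Pf j := (Finset.mem_sdiff.1 hv).2
    exact sdiff_erase_of_not_mem' hvP _

lemma sl_empty_subset {Uf Pf : Fin k → Finset (Fin n)} {j : Fin k} {x r : Fin n → Bool}
    (h : sl Uf Pf j x r = ∅) : Ds x r ∩ Uf j ⊆ Pf j := by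
  intro i hi
  by_contra hip
  have : i ∈ sl Uf Pf j x r := Finset.mem_sdiff.2 ⟨hi, hip⟩
  rw [h] at this
  simp at this

lemma erase_inter_of_not_mem' {w : Fin n} {T : Finset (Fin n)} (h : w ∉ T)
    (s : Finset (Fin n)) : s.erase w ∩ T = s ∩ T := by
  rw [erase_inter']
  apply Finset.erase_eq_of_notMem
  intro hm
  exact h (Finset.mem_inter.1 hm).2

def Phi (ctrl : Finset (Fin k)) (Pf : Fin k → Finset (Fin n)) (d : Cfg n k) : ℕ :=
  ∑ j ∈ ctrl, (Pf j \ Ds (d.1 j) d.2).card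

def wdist (U A : Finset (Fin n)) (f : Fin k) (d : Cfg n k) : ℕ :=
  (Ds (d.1 f) d.2 ∩ (U \ A)).card

lemma walk {U A : Finset (Fin n)} {ctrl : Finset (Fin k)} {Pf Uf : Fin k → Finset (Fin n)}
    (hStat : Stat U A ctrl Pf Uf) (hA : A.card ≤ 1) (f : Fin k) (hf : f ∉ ctrl) :
    ∀ mu0 (d : Cfg n k), slackOK ctrl Uf Pf d →
      Phi ctrl Pf d * (n+1) + wdist U A f d ≤ mu0 →
      ∃ m, ReachN (Gl U ctrl Uf Pf) m d := by
  classical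
  obtain ⟨hAU, hctrl, hcov, hdisj, hcard⟩ := hStat
  intro mu0
  induction mu0 with
  | zero =>
    intro d hsl hmu
    by_cases hg : ∃ j0, (Bset U ctrl Uf Pf d j0).card ≤ 1
    · obtain ⟨j0, hj0⟩ := hg
      exact ⟨1, one_round d hsl j0 hj0⟩
    · exfalso
      push_neg at hg
      have hBf := hg f
      have hBfeq : Bset U ctrl Uf Pf d f = Ds (d.1 f) d.2 ∩ U := by
        rw [Bset, if_neg hf, Finset.union_empty]
      rw [hBfeq] at hBf
      have hsub : Ds (d.1 f) d.2 ∩ U ⊆ (Ds (d.1 f) d.2 ∩ (U \ A)) ∪ A := by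
        intro x hx
        obtain ⟨hx1, hx2⟩ := Finset.mem_inter.1 hx
        by_cases hxA : x ∈ A
        · exact Finset.mem_union_right _ hxA
        · exact Finset.mem_union_left _
            (Finset.mem_inter.2 ⟨hx1, Finset.mem_sdiff.2 ⟨hx2, hxA⟩⟩)
      have h1 : (Ds (d.1 f) d.2 ∩ U).card ≤ wdist U A f d + A.card := by
        calc (Ds (d.1 f) d.2 ∩ U).card ≤ ((Ds (d.1 f) d.2 ∩ (U \ A)) ∪ A).card :=
              Finset.card_le_card hsub
          _ ≤ _ := Finset.card_union_le _ _
      have : 1 ≤ wdist U A f d := by omega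
      omega
  | succ mu0 ih =>
    intro d hsl hmu
    by_cases hg : ∃ j0, (Bset U ctrl Uf Pf d j0).card ≤ 1
    · obtain ⟨j0, hj0⟩ := hg
      exact ⟨1, one_round d hsl j0 hj0⟩
    push_neg at hg
    -- the set S of useful walking coordinates is nonempty
    have hBf := hg f
    have hBfeq : Bset U ctrl Uf Pf d f = Ds (d.1 f) d.2 ∩ U := by
      rw [Bset, if_neg hf, Finset.union_empty]
    rw [hBfeq] at hBf
    set S := Ds (d.1 f) d.2 ∩ (U \ A) with hSdef
    have hScard : 1 ≤ S.card := by
      have hsub : Ds (d.1 f) d.2 ∩ U ⊆ S ∪ A := by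
        intro x hx
        obtain ⟨hx1, hx2⟩ := Finset.mem_inter.1 hx
        by_cases hxA : x ∈ A
        · exact Finset.mem_union_right _ hxA
        · exact Finset.mem_union_left _
            (Finset.mem_inter.2 ⟨hx1, Finset.mem_sdiff.2 ⟨hx2, hxA⟩⟩)
      have h1 : (Ds (d.1 f) d.2 ∩ U).card ≤ S.card + A.card := by
        calc (Ds (d.1 f) d.2 ∩ U).card ≤ (S ∪ A).card := Finset.card_le_card hsub
          _ ≤ _ := Finset.card_union_le _ _
      omega
    have hSne : S.Nonempty := Finset.card_pos.1 (by omega)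
    set v := S.min' hSne with hvdef
    have hvS : v ∈ S := S.min'_mem hSne
    have hvD : v ∈ Ds (d.1 f) d.2 := (Finset.mem_inter.1 hvS).1
    set c' : Fin k → (Fin n → Bool) :=
      fun j => if j ∈ ctrl then ciMove Uf Pf d j else if j = f then flip v (d.1 f) else d.1 j
      with hc'def
    have hlegC : legalC d.1 c' := by
      intro j
      simp only [hc'def]
      split
      · exact ciMove_legal Uf Pf d j
      · split
        · next hjf => rw [hjf]; exact Or.inr (adj_flip _ _)
        · exact Or.inl rfl
    have hc'ctrl : ∀ j ∈ ctrl, c' j = ciMove Uf Pf d j := by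
      intro j hj; simp only [hc'def, if_pos hj]
    have hc'f : c' f = flip v (d.1 f) := by
      simp only [hc'def, if_neg hf, if_pos rfl, if_true]
    -- facts after the cops' move
    have hsl0mid : ∀ j ∈ ctrl, sl Uf Pf j (c' j) d.2 = ∅ := by
      intro j hj
      rw [hc'ctrl j hj]
      exact ciMove_slack0 Uf Pf d j (hsl j hj)
    have hDf : Ds (c' f) d.2 = (Ds (d.1 f) d.2).erase v := by
      rw [hc'f, Ds_flip_left, if_pos hvD]
    have hPhimid : ∀ j ∈ ctrl, Pf j \ Ds (c' j) d.2 = Pf j \ Ds (d.1 j) d.2 := by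
      intro j hj
      rw [hc'ctrl j hj]
      exact ciMove_Pf Uf Pf d j
    -- one full round
    apply step_lemma hlegC
    refine Or.inr fun r' hr' => ?_
    have hslOKe : slackOK ctrl Uf Pf ((c', r') : Cfg n k) := by
      intro j hj
      exact sl_robber_card (hsl0mid j hj) hr'
    by_cases hge : ∃ j0, (Bset U ctrl Uf Pf ((c', r') : Cfg n k) j0).card ≤ 1
    · obtain ⟨j0, hj0⟩ := hge
      exact ⟨1, one_round _ hslOKe j0 hj0⟩
    push_neg at hge
    -- show the measure strictly decreases
    have hdec : Phi ctrl Pf ((c', r') : Cfg n k) * (n+1) + wdist U A f ((c', r') : Cfg n k)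
        < Phi ctrl Pf d * (n+1) + wdist U A f d := by
      have hwd : wdist U A f d = S.card := rfl
      rcases legalR_cases hr' with hstay | ⟨w, hw⟩
      · -- robber stays
        subst hstay
        have hPhi : Phi ctrl Pf ((c', d.2) : Cfg n k) = Phi ctrl Pf d := by
          apply Finset.sum_congr rfl
          intro j hj
          rw [hPhimid j hj]
        have hwde : wdist U A f ((c', d.2) : Cfg n k) = S.card - 1 := by
          show (Ds (c' f) d.2 ∩ (U \ A)).card = S.card - 1
          rw [hDf, erase_inter', ← hSdef, Finset.card_erase_of_mem hvS]
        rw [hPhi, hwde, hwd]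
        omega
      · -- robber flips w
        subst hw
        by_cases hwB : w ∈ ctrl.biUnion Pf
        · obtain ⟨j1, hj1, hwP⟩ := Finset.mem_biUnion.1 hwB
          by_cases hwd2 : w ∈ Ds (c' j1) d.2
          · -- this would make the next configuration good, contradiction
            exfalso
            have hB1 := hge j1
            have hDs' : Ds (c' j1) (flip w d.2) = (Ds (c' j1) d.2).erase w := by
              rw [Ds_flip_right, if_pos hwd2]
            have hsl' : sl Uf Pf j1 (c' j1) (flip w d.2) = ∅ := by
              rw [sl, hDs', erase_inter', erase_sdiff']
              rw [← sl, hsl0mid j1 hj1]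
              simp
            have hwUf : w ∈ Uf j1 := (hctrl j1 hj1).2.1 hwP
            have hE : Ds (c' j1) d.2 ∩ Uf j1 ⊆ Pf j1 := sl_empty_subset (hsl0mid j1 hj1)
            have hsubU : Ds (c' j1) (flip w d.2) ∩ U ⊆ (Ds (c' j1) d.2 ∩ Uf j1).erase w := by
              rw [hDs', erase_inter']
              intro x hx
              obtain ⟨hx1, hx2⟩ := Finset.mem_erase.1 hx
              obtain ⟨hx3, hx4⟩ := Finset.mem_inter.1 hx2
              exact Finset.mem_erase.2 ⟨hx1, Finset.mem_inter.2 ⟨hx3, (hctrl j1 hj1).1 hx4⟩⟩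
            have hwE : w ∈ Ds (c' j1) d.2 ∩ Uf j1 := Finset.mem_inter.2 ⟨hwd2, hwUf⟩
            have hcard1 : ((Ds (c' j1) d.2 ∩ Uf j1).erase w).card ≤ 1 := by
              have h2 : (Ds (c' j1) d.2 ∩ Uf j1).card ≤ 2 :=
                le_trans (Finset.card_le_card hE) (hctrl j1 hj1).2.2.2
              rw [Finset.card_erase_of_mem hwE]
              omega
            have : (Bset U ctrl Uf Pf ((c', flip w d.2) : Cfg n k) j1).card ≤ 1 := by
              rw [Bset, if_pos hj1]
              show ((Ds (c' j1) (flip w d.2) ∩ U) ∪ sl Uf Pf j1 (c' j1) (flip w d.2)).card ≤ 1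
              rw [hsl', Finset.union_empty]
              exact le_trans (Finset.card_le_card hsubU) hcard1
            omega
          · -- Phi strictly decreases
            have hterm_le : ∀ j ∈ ctrl,
                (Pf j \ Ds (c' j) (flip w d.2)).card ≤ (Pf j \ Ds (d.1 j) d.2).card := by
              intro j hj
              by_cases hjj : j = j1
              · subst hjj
                have : Ds (c' j) (flip w d.2) = insert w (Ds (c' j) d.2) := by
                  rw [Ds_flip_right, if_neg hwd2]
                rw [this, sdiff_insert_eq_erase', hPhimid j hj]
                exact Finset.card_le_card (Finset.erase_subset _ _)
              · have hwPj : w ∉ Pf j := by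
                  intro hmem
                  have := hdisj j hj j1 hj1 hjj
                  have : w ∈ Pf j ∩ Pf j1 := Finset.mem_inter.2 ⟨hmem, hwP⟩
                  rw [hdisj j hj j1 hj1 hjj] at this
                  simp at this
                rw [Ds_flip_right]
                split
                · rw [sdiff_erase_of_not_mem' hwPj, hPhimid j hj]
                · rw [sdiff_insert_of_not_mem' hwPj, hPhimid j hj]
            have hterm_lt : (Pf j1 \ Ds (c' j1) (flip w d.2)).card
                < (Pf j1 \ Ds (d.1 j1) d.2).card := by
              have heq : Ds (c' j1) (flip w d.2) = insert w (Ds (c' j1) d.2) := by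
                rw [Ds_flip_right, if_neg hwd2]
              have hwmem : w ∈ Pf j1 \ Ds (c' j1) d.2 := Finset.mem_sdiff.2 ⟨hwP, hwd2⟩
              rw [heq, sdiff_insert_eq_erase']
              calc ((Pf j1 \ Ds (c' j1) d.2).erase w).card
                  = (Pf j1 \ Ds (c' j1) d.2).card - 1 := Finset.card_erase_of_mem hwmem
                _ < (Pf j1 \ Ds (c' j1) d.2).card := by
                    have : 1 ≤ (Pf j1 \ Ds (c' j1) d.2).card := Finset.card_pos.2 ⟨w, hwmem⟩
                    omega
                _ = (Pf j1 \ Ds (d.1 j1) d.2).card := by rw [hPhimid j1 hj1]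
            have hPhilt : Phi ctrl Pf ((c', flip w d.2) : Cfg n k) < Phi ctrl Pf d := by
              apply Finset.sum_lt_sum hterm_le ⟨j1, hj1, hterm_lt⟩
            have hwdle : wdist U A f ((c', flip w d.2) : Cfg n k) ≤ n := by
              have : (Ds (c' f) (flip w d.2) ∩ (U \ A)).card ≤ (Finset.univ : Finset (Fin n)).card :=
                Finset.card_le_card (Finset.subset_univ _)
              simpa [wdist] using this
            calc Phi ctrl Pf ((c', flip w d.2) : Cfg n k) * (n+1)
                  + wdist U A f ((c', flip w d.2) : Cfg n k)
                ≤ Phi ctrl Pf ((c', flip w d.2) : Cfg n k) * (n+1) + n := by omega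
              _ < (Phi ctrl Pf ((c', flip w d.2) : Cfg n k) + 1) * (n+1) := by
                  rw [Nat.add_mul, Nat.one_mul]; omega
              _ ≤ Phi ctrl Pf d * (n+1) := Nat.mul_le_mul_right _ (by omega)
              _ ≤ Phi ctrl Pf d * (n+1) + wdist U A f d := by omega
        · -- w is outside every controlled pair
          have hwUA : w ∉ U \ A := fun hmem => hwB (hcov hmem)
          have hPhi : Phi ctrl Pf ((c', flip w d.2) : Cfg n k) = Phi ctrl Pf d := by
            apply Finset.sum_congr rfl
            intro j hj
            have hwPj : w ∉ Pf j := by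
              intro hmem
              exact hwB (Finset.mem_biUnion.2 ⟨j, hj, hmem⟩)
            rw [Ds_flip_right]
            split
            · rw [sdiff_erase_of_not_mem' hwPj, hPhimid j hj]
            · rw [sdiff_insert_of_not_mem' hwPj, hPhimid j hj]
          have hwde : wdist U A f ((c', flip w d.2) : Cfg n k) = S.card - 1 := by
            show (Ds (c' f) (flip w d.2) ∩ (U \ A)).card = S.card - 1
            rw [Ds_flip_right]
            split
            · rw [erase_inter_of_not_mem' hwUA, hDf, erase_inter', ← hSdef,
                Finset.card_erase_of_mem hvS]
            · rw [insert_inter_of_not_mem' _ hwUA, hDf, erase_inter', ← hSdef,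
                Finset.card_erase_of_mem hvS]
          rw [hPhi, hwde, hwd]
          omega
    have := ih ((c', r') : Cfg n k) hslOKe (by omega)
    exact this

lemma exists_free {A : Finset (Fin n)} {ctrl : Finset (Fin k)}
    (hcard : 2 * ctrl.card + A.card + 1 ≤ 2 * k) : ∃ f, f ∉ ctrl := by
  by_contra h
  push_neg at h
  have : ctrl = Finset.univ := Finset.eq_univ_iff_forall.2 h
  rw [this, Finset.card_univ, Fintype.card_fin] at hcard
  omega

lemma ML : ∀ (N : ℕ) (U A : Finset (Fin n)) (ctrl : Finset (Fin k))
    (Pf Uf : Fin k → Finset (Fin n)) (d : Cfg n k),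
    A.card ≤ N → Stat U A ctrl Pf Uf → slackOK ctrl Uf Pf d →
    ∃ m, ReachN (Gl U ctrl Uf Pf) m d := by
  classical
  intro N
  induction N with
  | zero =>
    intro U A ctrl Pf Uf d hN hStat hsl
    obtain ⟨f, hf⟩ := exists_free hStat.2.2.2.2
    exact walk hStat (by omega) f hf _ d hsl le_rfl
  | succ N ih =>
    intro U A ctrl Pf Uf d hN hStat hsl
    by_cases hA1 : A.card ≤ 1
    · obtain ⟨f, hf⟩ := exists_free hStat.2.2.2.2
      exact walk hStat hA1 f hf _ d hsl le_rfl
    · push_neg at hA1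
      obtain ⟨hAU, hctrl, hcov, hdisj, hcard⟩ := hStat
      obtain ⟨a, ha, b, hb, hab⟩ := Finset.one_lt_card.1 hA1
      set P : Finset (Fin n) := {a, b} with hPdef
      have hPA : P ⊆ A := by
        intro x hx
        rcases Finset.mem_insert.1 hx with h | h
        · exact h ▸ ha
        · exact (Finset.mem_singleton.1 h) ▸ hb
      have hPcard : P.card = 2 := by
        rw [hPdef, Finset.card_insert_of_notMem (by simp [hab]), Finset.card_singleton]
      have hAPcard : (A \ P).card = A.card - 2 := by
        rw [Finset.card_sdiff_of_subset hPA, hPcard]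
      -- inner game on U \ P
      have hStatInner : Stat (U \ P) (A \ P) ctrl Pf Uf := by
        refine ⟨?_, ?_, ?_, hdisj, ?_⟩
        · intro x hx
          obtain ⟨hx1, hx2⟩ := Finset.mem_sdiff.1 hx
          exact Finset.mem_sdiff.2 ⟨hAU hx1, hx2⟩
        · intro j hj
          obtain ⟨h1, h2, h3, h4⟩ := hctrl j hj
          refine ⟨fun x hx => h1 (Finset.mem_sdiff.1 hx).1, h2, ?_, h4⟩
          apply Finset.eq_empty_of_forall_notMem
          intro x hx
          obtain ⟨hx1, hx2⟩ := Finset.mem_inter.1 hx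
          have : x ∈ Pf j ∩ A := Finset.mem_inter.2 ⟨hx1, (Finset.mem_sdiff.1 hx2).1⟩
          rw [h3] at this
          simp at this
        · intro x hx
          obtain ⟨hx1, hx2⟩ := Finset.mem_sdiff.1 hx
          obtain ⟨hx3, hx4⟩ := Finset.mem_sdiff.1 hx1
          apply hcov
          refine Finset.mem_sdiff.2 ⟨hx3, fun hxA => hx2 (Finset.mem_sdiff.2 ⟨hxA, hx4⟩)⟩
        · omega
      obtain ⟨m1, hm1⟩ := ih (U \ P) (A \ P) ctrl Pf Uf d (by omega) hStatInner hsl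
      -- compose with the continuation
      apply comp (G₁ := Gl (U \ P) ctrl Uf Pf) (G₂ := Gl U ctrl Uf Pf) ?_ hm1
      rintro e ⟨hsl0e, f0, hf0⟩
      by_cases hfc : f0 ∈ ctrl
      · -- an existing controller already captures relative to U
        have hcap : Ds (e.1 f0) e.2 ∩ U = ∅ := by
          apply Finset.eq_empty_of_forall_notMem
          intro x hx
          obtain ⟨hx1, hx2⟩ := Finset.mem_inter.1 hx
          have hxUf : x ∈ Uf f0 := (hctrl f0 hfc).1 hx2
          have hxPf : x ∈ Pf f0 :=
            sl_empty_subset (hsl0e f0 hfc) (Finset.mem_inter.2 ⟨hx1, hxUf⟩)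
          have hxP : x ∈ P := by
            by_contra hxP
            have : x ∈ Ds (e.1 f0) e.2 ∩ (U \ P) :=
              Finset.mem_inter.2 ⟨hx1, Finset.mem_sdiff.2 ⟨hx2, hxP⟩⟩
            rw [hf0] at this
            simp at this
          have : x ∈ Pf f0 ∩ A := Finset.mem_inter.2 ⟨hxPf, hPA hxP⟩
          rw [(hctrl f0 hfc).2.2.1] at this
          simp at this
        constructor
        · exact ⟨0, hsl0e, f0, hcap⟩
        · intro r'' hr''
          refine ⟨1, one_round _ (fun j hj => sl_robber_card (hsl0e j hj) hr'') f0 ?_⟩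
          -- Bset of f0 after the robber's move has at most one element
          have hsle : sl Uf Pf f0 (e.1 f0) e.2 = ∅ := hsl0e f0 hfc
          rcases legalR_cases hr'' with hstay | ⟨w, hw⟩
          · subst hstay
            rw [Bset, if_pos hfc]
            show ((Ds (e.1 f0) e.2 ∩ U) ∪ sl Uf Pf f0 (e.1 f0) e.2).card ≤ 1
            rw [hcap, hsle]
            simp
          · subst hw
            rw [Bset, if_pos hfc]
            show ((Ds (e.1 f0) (flip w e.2) ∩ U) ∪ sl Uf Pf f0 (e.1 f0) (flip w e.2)).card ≤ 1
            have hsub : (Ds (e.1 f0) (flip w e.2) ∩ U) ∪ sl Uf Pf f0 (e.1 f0) (flip w e.2)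
                ⊆ {w} := by
              intro x hx
              rw [Finset.mem_singleton]
              by_contra hxw
              have hxDs : x ∈ Ds (e.1 f0) (flip w e.2) := by
                rcases Finset.mem_union.1 hx with h | h
                · exact (Finset.mem_inter.1 h).1
                · exact mem_sl_Ds h
              have hxDs0 : x ∈ Ds (e.1 f0) e.2 := by
                rw [Ds_flip_right] at hxDs
                split at hxDs
                · exact Finset.mem_of_mem_erase hxDs
                · rcases Finset.mem_insert.1 hxDs with h | h
                  · exact absurd h hxw
                  · exact h
              rcases Finset.mem_union.1 hx with h | h
              · have : x ∈ Ds (e.1 f0) e.2 ∩ U :=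
                  Finset.mem_inter.2 ⟨hxDs0, (Finset.mem_inter.1 h).2⟩
                rw [hcap] at this
                simp at this
              · obtain ⟨hx1, hx2⟩ := Finset.mem_sdiff.1 h
                have : x ∈ sl Uf Pf f0 (e.1 f0) e.2 := Finset.mem_sdiff.2
                  ⟨Finset.mem_inter.2 ⟨hxDs0, (Finset.mem_inter.1 hx1).2⟩, hx2⟩
                rw [hsle] at this
                simp at this
            calc ((Ds (e.1 f0) (flip w e.2) ∩ U) ∪ sl Uf Pf f0 (e.1 f0) (flip w e.2)).card
                ≤ ({w} : Finset (Fin n)).card := Finset.card_le_card hsub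
              _ = 1 := Finset.card_singleton w
      · -- promote f0 to a controller of the pair P
        set ctrl' := insert f0 ctrl with hctrl'def
        set Pf' := Function.update Pf f0 P with hPf'def
        set Uf' := Function.update Uf f0 U with hUf'def
        have hPfj : ∀ j ∈ ctrl, Pf' j = Pf j := by
          intro j hj
          rw [hPf'def, Function.update_of_ne (fun h => hfc (by rw [← h]; exact hj)) _ _]
        have hUfj : ∀ j ∈ ctrl, Uf' j = Uf j := by
          intro j hj
          rw [hUf'def, Function.update_of_ne (fun h => hfc (by rw [← h]; exact hj)) _ _]
        have hPff0 : Pf' f0 = P := by rw [hPf'def]; simp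
        have hUff0 : Uf' f0 = U := by rw [hUf'def]; simp
        have hStat' : Stat U (A \ P) ctrl' Pf' Uf' := by
          refine ⟨fun x hx => hAU (Finset.mem_sdiff.1 hx).1, ?_, ?_, ?_, ?_⟩
          · intro j hj
            rcases Finset.mem_insert.1 hj with hj0 | hj0
            · subst hj0
              rw [hPff0, hUff0]
              refine ⟨le_refl _, fun x hx => hAU (hPA hx), ?_, by rw [hPcard]⟩
              apply Finset.eq_empty_of_forall_notMem
              intro x hx
              obtain ⟨hx1, hx2⟩ := Finset.mem_inter.1 hx
              exact (Finset.mem_sdiff.1 hx2).2 hx1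
            · obtain ⟨h1, h2, h3, h4⟩ := hctrl j hj0
              rw [hPfj j hj0, hUfj j hj0]
              refine ⟨h1, h2, ?_, h4⟩
              apply Finset.eq_empty_of_forall_notMem
              intro x hx
              obtain ⟨hx1, hx2⟩ := Finset.mem_inter.1 hx
              have : x ∈ Pf j ∩ A := Finset.mem_inter.2 ⟨hx1, (Finset.mem_sdiff.1 hx2).1⟩
              rw [h3] at this
              simp at this
          · intro x hx
            obtain ⟨hx1, hx2⟩ := Finset.mem_sdiff.1 hx
            by_cases hxP : x ∈ P
            · exact Finset.mem_biUnion.2 ⟨f0, Finset.mem_insert_self _ _, by rw [hPff0]; exact hxP⟩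
            · have hxA : x ∉ A := fun hxA => hx2 (Finset.mem_sdiff.2 ⟨hxA, hxP⟩)
              obtain ⟨j, hj, hjx⟩ := Finset.mem_biUnion.1 (hcov (Finset.mem_sdiff.2 ⟨hx1, hxA⟩))
              exact Finset.mem_biUnion.2 ⟨j, Finset.mem_insert_of_mem hj, by rw [hPfj j hj]; exact hjx⟩
          · intro j hj j' hj' hjj'
            rcases Finset.mem_insert.1 hj with hj0 | hj0 <;>
              rcases Finset.mem_insert.1 hj' with hj0' | hj0'
            · exact absurd (hj0.trans hj0'.symm) hjj'
            · subst hj0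
              rw [hPff0, hPfj j' hj0']
              apply Finset.eq_empty_of_forall_notMem
              intro x hx
              obtain ⟨hx1, hx2⟩ := Finset.mem_inter.1 hx
              have : x ∈ Pf j' ∩ A := Finset.mem_inter.2 ⟨hx2, hPA hx1⟩
              rw [(hctrl j' hj0').2.2.1] at this
              simp at this
            · subst hj0'
              rw [hPff0, hPfj j hj0]
              apply Finset.eq_empty_of_forall_notMem
              intro x hx
              obtain ⟨hx1, hx2⟩ := Finset.mem_inter.1 hx
              have : x ∈ Pf j ∩ A := Finset.mem_inter.2 ⟨hx1, hPA hx2⟩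
              rw [(hctrl j hj0).2.2.1] at this
              simp at this
            · rw [hPfj j hj0, hPfj j' hj0']
              exact hdisj j hj0 j' hj0' hjj'
          · rw [hctrl'def, Finset.card_insert_of_notMem hfc]
            omega
        have hslf0 : sl Uf' Pf' f0 (e.1 f0) e.2 = ∅ := by
          rw [sl, hPff0, hUff0]
          apply Finset.eq_empty_of_forall_notMem
          intro x hx
          obtain ⟨hx1, hx2⟩ := Finset.mem_sdiff.1 hx
          obtain ⟨hx3, hx4⟩ := Finset.mem_inter.1 hx1
          have : x ∈ Ds (e.1 f0) e.2 ∩ (U \ P) :=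
            Finset.mem_inter.2 ⟨hx3, Finset.mem_sdiff.2 ⟨hx4, hx2⟩⟩
          rw [hf0] at this
          simp at this
        have hmono : ∀ e', Gl U ctrl' Uf' Pf' e' → Gl U ctrl Uf Pf e' := by
          rintro e' ⟨h1, h2⟩
          refine ⟨?_, h2⟩
          intro j hj
          have := h1 j (Finset.mem_insert_of_mem hj)
          rwa [sl, hPfj j hj, hUfj j hj, ← sl] at this
        constructor
        · have hsl' : slackOK ctrl' Uf' Pf' e := by
            intro j hj
            rcases Finset.mem_insert.1 hj with hj0 | hj0
            · subst hj0; rw [hslf0]; simp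
            · rw [sl, hPfj j hj0, hUfj j hj0, ← sl, hsl0e j hj0]; simp
          obtain ⟨m, hm⟩ := ih U (A \ P) ctrl' Pf' Uf' e (by omega) hStat' hsl'
          exact ⟨m, ReachN_monoG hmono hm⟩
        · intro r'' hr''
          have hsl' : slackOK ctrl' Uf' Pf' ((e.1, r'') : Cfg n k) := by
            intro j hj
            rcases Finset.mem_insert.1 hj with hj0 | hj0
            · subst hj0
              exact sl_robber_card hslf0 hr''
            · have h0 : sl Uf' Pf' j (e.1 j) e.2 = ∅ := by
                rw [sl, hPfj j hj0, hUfj j hj0, ← sl]; exact hsl0e j hj0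
              exact sl_robber_card h0 hr''
          obtain ⟨m, hm⟩ := ih U (A \ P) ctrl' Pf' Uf' ((e.1, r'') : Cfg n k)
            (by omega) hStat' hsl'
          exact ⟨m, ReachN_monoG hmono hm⟩

lemma cops_win (n : ℕ) : CopsWin (Qcube n) ((n + 2) / 2) := by
  classical
  set k := (n + 2) / 2 with hk
  apply bridge (cInit := fun _ _ => false)
  intro r
  have hstat : Stat (n := n) (k := k) Finset.univ Finset.univ ∅ (fun _ => ∅) (fun _ => ∅) := by
    refine ⟨le_refl _, ?_, ?_, ?_, ?_⟩
    · intro j hj; simp at hj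
    · intro x hx; simp at hx
    · intro j hj; simp at hj
    · rw [Finset.card_empty, Finset.card_univ, Fintype.card_fin]
      omega
  obtain ⟨m, hm⟩ := ML (n := n) (k := k) n Finset.univ Finset.univ ∅ (fun _ => ∅) (fun _ => ∅)
    ((fun _ _ => false, r) : Cfg n k)
    (by rw [Finset.card_univ, Fintype.card_fin]) hstat (fun j hj => by simp at hj)
  refine ⟨m, ReachN_monoG ?_ hm⟩
  rintro e ⟨-, j, hj⟩
  refine ⟨j, ?_⟩
  rw [Finset.inter_univ] at hj
  exact Ds_eq_empty.1 hj

end CR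

/-- The cop number of the hypercube `Q_n` is at most `⌈(n+1)/2⌉`. -/
theorem stmt8 (n : ℕ) : copNumber (Qcube n) ≤ (n + 2) / 2 := by
  apply Nat.sInf_le
  exact CR.cops_win n
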